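/- Let $g \in L^2([-1,1]^d)$ with Haar tensor decomposition $g = \sum_S f_S$ indexed by subsets $S \subseteq \{1,\dots,d\}$ (where $f_S$ collects the Haar terms $\Psi_{\mathbf{j},\mathbf{k}}$ with $\mathrm{supp}(\mathbf{j}) = S$), and set $g_2 = \sum_{|S|=2} f_S$. For each $l$, let $\lambda_l$ denote orthogonal projection onto the subspace $\mathsf{SAff}_l$ of functions affine on every hyperplane $\{x_l = c\}$. If $d \ge 3$, then $(d-2)\|g_2\|_2^2 \le \sum_{l=1}^d \|g_2 - \lambda_l(g_2)\|_2^2 \le d\,\|g_2\|_2^2$. -/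

import Mathlib

open scoped BigOperators ENNReal
open MeasureTheory Classical
noncomputable section

def haar (j k : ℕ) (t : ℝ) : ℝ :=
  if j = 0 then 1
  else
    if (2 * k) * 2 ^ (1 - (j : ℤ)) - 1 ≤ t ∧ t < (2 * k + 1) * 2 ^ (1 - (j : ℤ)) - 1 then -1
    else if (2 * k + 1) * 2 ^ (1 - (j : ℤ)) - 1 ≤ t ∧ t < (2 * k + 2) * 2 ^ (1 - (j : ℤ)) - 1 then 1
    else 0

def Box (d : ℕ) : Set (Fin d → ℝ) := Set.univ.pi fun _ => Set.Icc (-1 : ℝ) 1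

def boxMeasure (d : ℕ) : Measure (Fin d → ℝ) := volume.restrict (Box d)

def haarTensor {d : ℕ} (j k : Fin d → ℕ) : (Fin d → ℝ) → ℝ :=
  fun x => ∏ i, haar (j i) (k i) (x i)

def ValidIdx {d : ℕ} (j k : Fin d → ℕ) : Prop :=
  ∀ i, (j i = 0 → k i = 0) ∧ (j i ≠ 0 → k i < 2 ^ (j i - 1))

/-- The closed span, in `L²([-1,1]^d)`, of the Haar functions `Ψ_{𝐣,𝐤}` whose
multi-index `𝐣` has support exactly the set `S`. -/
def HaarSpanS (d : ℕ) (S : Finset (Fin d)) : Submodule ℝ (Lp ℝ 2 (boxMeasure d)) :=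
  (Submodule.span ℝ {h : Lp ℝ 2 (boxMeasure d) | ∃ j k : Fin d → ℕ, ValidIdx j k ∧
    (Finset.univ.filter fun m => j m ≠ 0) = S ∧
    ⇑h =ᵐ[boxMeasure d] haarTensor j k}).topologicalClosure

def IsSliceAffine {d : ℕ} (i : Fin d) (f : (Fin d → ℝ) → ℝ) : Prop :=
  ∃ (a : ℝ → Fin d → ℝ) (b : ℝ → ℝ), ∀ x, f x = ∑ j, a (x i) j * x j + b (x i)

/-- The functions that are affine on every hyperplane slice `{x_l = c}`,
viewed inside `L²([-1,1]^d)`. -/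
def SAffL (d : ℕ) (l : Fin d) : Set (Lp ℝ 2 (boxMeasure d)) :=
  {h | ∃ f, IsSliceAffine l f ∧ ⇑h =ᵐ[boxMeasure d] f}

open scoped RealInnerProductSpace
set_option maxHeartbeats 1000000

section auxiliaryLemmas

lemma measurable_haar (j k : ℕ) : Measurable (haar j k) := by
  unfold haar
  split_ifs with h
  · exact measurable_const
  · apply Measurable.ite
    · exact (measurableSet_le measurable_const measurable_id).inter
        (measurableSet_lt measurable_id measurable_const)
    · exact measurable_const
    · apply Measurable.ite
      · exact (measurableSet_le measurable_const measurable_id).inter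
          (measurableSet_lt measurable_id measurable_const)
      · exact measurable_const
      · exact measurable_const

lemma abs_haar_le (j k : ℕ) (t : ℝ) : |haar j k t| ≤ 1 := by
  unfold haar; split_ifs <;> norm_num

lemma haar_eq_indicator (j k : ℕ) (hj : j ≠ 0) :
    haar j k = fun t =>
      (Set.Ico ((2 * (k:ℝ) + 1) * 2 ^ (1 - (j : ℤ)) - 1) ((2 * k + 2) * 2 ^ (1 - (j : ℤ)) - 1)).indicator (fun _ => (1:ℝ)) t
      - (Set.Ico ((2 * (k:ℝ)) * 2 ^ (1 - (j : ℤ)) - 1) ((2 * k + 1) * 2 ^ (1 - (j : ℤ)) - 1)).indicator (fun _ => (1:ℝ)) t := by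
  funext t
  unfold haar
  rw [if_neg hj]
  have hpos : (0:ℝ) < 2 ^ (1 - (j : ℤ)) := by positivity
  by_cases h1 : (2 * (k:ℝ)) * 2 ^ (1 - (j : ℤ)) - 1 ≤ t ∧ t < (2 * k + 1) * 2 ^ (1 - (j : ℤ)) - 1
  · rw [if_pos h1]
    rw [Set.indicator_of_notMem, Set.indicator_of_mem (by exact ⟨h1.1, h1.2⟩)]
    · ring
    · intro hmem
      linarith [hmem.1, h1.2]
  · rw [if_neg h1]
    by_cases h2 : (2 * (k:ℝ) + 1) * 2 ^ (1 - (j : ℤ)) - 1 ≤ t ∧ t < (2 * k + 2) * 2 ^ (1 - (j : ℤ)) - 1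
    · rw [if_pos h2, Set.indicator_of_mem (by exact ⟨h2.1, h2.2⟩), Set.indicator_of_notMem]
      · ring
      · intro hmem; linarith [hmem.2, h2.1]
    · rw [if_neg h2, Set.indicator_of_notMem, Set.indicator_of_notMem]
      · ring
      · intro hmem; exact h1 ⟨hmem.1, hmem.2⟩
      · intro hmem; exact h2 ⟨hmem.1, hmem.2⟩

lemma integral_haar_zero (j k : ℕ) (hj : j ≠ 0) (hk : k < 2 ^ (j - 1)) :
    ∫ t in Set.Icc (-1:ℝ) 1, haar j k t = 0 := by
  have hpos : (0:ℝ) < 2 ^ (1 - (j : ℤ)) := by positivity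
  set e : ℝ := 2 ^ (1 - (j : ℤ)) with he
  -- bounds
  have hk1 : ((k:ℝ) + 1) * e ≤ 1 := by
    have h2 : ((k:ℝ) + 1) ≤ 2 ^ ((j:ℤ) - 1) := by
      have : (k + 1 : ℕ) ≤ 2 ^ (j - 1) := hk
      have hcast : ((k:ℝ) + 1) ≤ (2:ℝ) ^ (j - 1 : ℕ) := by exact_mod_cast this
      have : (2:ℝ) ^ ((j:ℤ) - 1) = (2:ℝ) ^ (j - 1 : ℕ) := by
        rw [← zpow_natCast]
        congr 1
        omega
      rw [this]; exact hcast
    have hprod : (2:ℝ) ^ ((j:ℤ) - 1) * e = 1 := by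
      rw [he, ← zpow_add₀ (by norm_num : (2:ℝ) ≠ 0)]
      norm_num
    calc ((k:ℝ) + 1) * e ≤ 2 ^ ((j:ℤ) - 1) * e := by
          apply mul_le_mul_of_nonneg_right h2 (le_of_lt hpos)
      _ = 1 := hprod
  have hA : (-1:ℝ) ≤ 2 * (k:ℝ) * e - 1 := by nlinarith [mul_nonneg (by positivity : (0:ℝ) ≤ 2*(k:ℝ)) (le_of_lt hpos)]
  have hC : (2 * (k:ℝ) + 2) * e - 1 ≤ 1 := by nlinarith
  have hAB : 2 * (k:ℝ) * e - 1 ≤ (2 * k + 1) * e - 1 := by nlinarith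
  have hBC : (2 * (k:ℝ) + 1) * e - 1 ≤ (2 * k + 2) * e - 1 := by nlinarith
  rw [haar_eq_indicator j k hj]
  rw [integral_sub]
  · have key : ∀ a b : ℝ, a ≤ b → -1 ≤ a → b ≤ 1 →
        (∫ t in Set.Icc (-1:ℝ) 1, (Set.Ico a b).indicator (fun _ => (1:ℝ)) t) = b - a := by
      intro a b hab ha hb
      rw [setIntegral_indicator measurableSet_Ico]
      have : Set.Ico a b ∩ Set.Icc (-1:ℝ) 1 = Set.Ico a b := by
        apply Set.inter_eq_left.mpr
        intro t ht
        exact ⟨le_trans ha ht.1, le_trans (le_of_lt ht.2) hb⟩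
      rw [Set.inter_comm] at this
      rw [this, setIntegral_const, Measure.real, Real.volume_Ico, smul_eq_mul, mul_one,
        ENNReal.toReal_ofReal (by linarith)]
    rw [key _ _ hBC (le_trans hA hAB) hC, key _ _ hAB hA (le_trans hBC hC)]
    ring
  · apply Integrable.indicator (integrable_const 1) measurableSet_Ico
  · apply Integrable.indicator (integrable_const 1) measurableSet_Ico

-- indicator of box as product of indicators
lemma box_indicator_prod {ι : Type*} [Fintype ι] (g : ι → ℝ → ℝ) (x : ι → ℝ) :
    (Set.univ.pi fun _ : ι => Set.Icc (-1:ℝ) 1).indicator (fun x => ∏ i, g i (x i)) x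
      = ∏ i, (Set.Icc (-1:ℝ) 1).indicator (g i) (x i) := by
  by_cases hx : x ∈ Set.univ.pi fun _ : ι => Set.Icc (-1:ℝ) 1
  · rw [Set.indicator_of_mem hx]
    apply Finset.prod_congr rfl
    intro i _
    rw [Set.indicator_of_mem (hx i (Set.mem_univ i))]
  · rw [Set.indicator_of_notMem hx]
    rw [Set.mem_univ_pi] at hx
    push_neg at hx
    obtain ⟨i, hi⟩ := hx
    symm
    apply Finset.prod_eq_zero (Finset.mem_univ i)
    rw [Set.indicator_of_notMem hi]

lemma box_prod_integral {ι : Type*} [Fintype ι] (g : ι → ℝ → ℝ) :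
    ∫ x : ι → ℝ in (Set.univ.pi fun _ : ι => Set.Icc (-1:ℝ) 1), ∏ i, g i (x i)
      = ∏ i, ∫ t in Set.Icc (-1:ℝ) 1, g i t := by
  rw [← integral_indicator (MeasurableSet.univ_pi fun _ => measurableSet_Icc)]
  have : ∀ x, (Set.univ.pi fun _ : ι => Set.Icc (-1:ℝ) 1).indicator (fun x => ∏ i, g i (x i)) x
      = ∏ i, (Set.Icc (-1:ℝ) 1).indicator (g i) (x i) := box_indicator_prod g
  simp_rw [this]
  rw [volume_pi, MeasureTheory.integral_fintype_prod_eq_prod (fun i => (Set.Icc (-1:ℝ) 1).indicator (g i))]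
  apply Finset.prod_congr rfl
  intro i _
  rw [integral_indicator measurableSet_Icc]

lemma haar_zero_eq_one (k : ℕ) : haar 0 k = fun _ => (1:ℝ) := by
  funext t; unfold haar; simp

-- generic integrability on the box
lemma integrableOn_box_prod {ι : Type*} [Fintype ι] (g : ι → ℝ → ℝ)
    (hm : ∀ i, Measurable (g i)) (hb : ∀ i, ∀ t ∈ Set.Icc (-1:ℝ) 1, |g i t| ≤ 1) :
    IntegrableOn (fun x : ι → ℝ => ∏ i, g i (x i))
      (Set.univ.pi fun _ : ι => Set.Icc (-1:ℝ) 1) := by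
  have hmeas : Measurable (fun x : ι → ℝ => ∏ i, g i (x i)) := by
    apply Finset.measurable_prod
    intro i _
    exact (hm i).comp (measurable_pi_apply i)
  have hfin : volume (Set.univ.pi fun _ : ι => Set.Icc (-1:ℝ) 1) < ⊤ := by
    rw [volume_pi_pi]
    simp [Real.volume_Icc]
  haveI : IsFiniteMeasure (volume.restrict (Set.univ.pi fun _ : ι => Set.Icc (-1:ℝ) 1)) := by
    constructor
    rw [Measure.restrict_apply_univ]
    exact hfin
  refine ⟨hmeas.aestronglyMeasurable, ?_⟩
  apply MeasureTheory.HasFiniteIntegral.of_bounded (C := 1)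
  rw [ae_restrict_iff' (MeasurableSet.univ_pi fun _ => measurableSet_Icc)]
  apply Filter.Eventually.of_forall
  intro x hx
  rw [Real.norm_eq_abs, Finset.abs_prod]
  apply Finset.prod_le_one
  · intro i _; positivity
  · intro i _; exact hb i (x i) (hx i (Set.mem_univ i))

-- orthogonality of haar tensors with different supports
lemma haarTensor_orth {d : ℕ} (j k j' k' : Fin d → ℕ) (hv : ValidIdx j k) (hv' : ValidIdx j' k')
    (hne : (Finset.univ.filter fun m => j m ≠ 0) ≠ (Finset.univ.filter fun m => j' m ≠ 0)) :
    ∫ x, haarTensor j k x * haarTensor j' k' x ∂(boxMeasure d) = 0 := by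
  have : ∀ x : Fin d → ℝ, haarTensor j k x * haarTensor j' k' x
      = ∏ i, (haar (j i) (k i) (x i) * haar (j' i) (k' i) (x i)) := by
    intro x; rw [haarTensor, haarTensor, ← Finset.prod_mul_distrib]
  simp_rw [boxMeasure, Box, this]
  rw [box_prod_integral (fun i t => haar (j i) (k i) t * haar (j' i) (k' i) t)]
  -- find an index where supports differ
  have : ∃ i : Fin d, (j i ≠ 0 ∧ j' i = 0) ∨ (j i = 0 ∧ j' i ≠ 0) := by
    by_contra hcon
    push_neg at hcon
    apply hne
    ext i
    simp only [Finset.mem_filter, Finset.mem_univ, true_and]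
    have := hcon i
    tauto
  obtain ⟨i, hi⟩ := this
  apply Finset.prod_eq_zero (Finset.mem_univ i)
  rcases hi with ⟨h1, h2⟩ | ⟨h1, h2⟩
  · simp_rw [h2, haar_zero_eq_one, mul_one]
    exact integral_haar_zero _ _ h1 ((hv i).2 h1)
  · simp_rw [h1, haar_zero_eq_one, one_mul]
    exact integral_haar_zero _ _ h2 ((hv' i).2 h2)

lemma measurableSet_box (d : ℕ) : MeasurableSet (Box d) :=
  MeasurableSet.univ_pi fun _ => measurableSet_Icc

lemma measurable_haarTensor {d : ℕ} (j k : Fin d → ℕ) : Measurable (haarTensor j k) := by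
  apply Finset.measurable_prod
  intro i _
  exact (measurable_haar _ _).comp (measurable_pi_apply i)

lemma abs_haarTensor_le {d : ℕ} (j k : Fin d → ℕ) (x : Fin d → ℝ) : |haarTensor j k x| ≤ 1 := by
  rw [haarTensor, Finset.abs_prod]
  apply Finset.prod_le_one
  · intro i _; positivity
  · intro i _; exact abs_haar_le _ _ _

instance boxMeasure_finite (d : ℕ) : IsFiniteMeasure (boxMeasure d) := by
  constructor
  rw [boxMeasure, Measure.restrict_apply_univ, Box, volume_pi_pi]
  simp [Real.volume_Icc]

theorem haarTensor_orth_sliceAffine_aux {d : ℕ} (l : Fin d) (p : Fin d → Prop)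
    [DecidablePred p] (hpdef : ∀ i, p i ↔ i = l)
    (j k : Fin d → ℕ) (hv : ValidIdx j k)
    (i1 i2 : Fin d) (h12 : i1 ≠ i2) (h1l : i1 ≠ l) (h2l : i2 ≠ l)
    (hj1 : j i1 ≠ 0) (hj2 : j i2 ≠ 0)
    (h : Lp ℝ 2 (boxMeasure d)) (f : (Fin d → ℝ) → ℝ) (hf : IsSliceAffine l f)
    (hfh : ⇑h =ᵐ[boxMeasure d] f) :
    ∫ x, haarTensor j k x * h x ∂(boxMeasure d) = 0 := by
  obtain ⟨a, b, hab⟩ := hf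
  have hpl : p l := (hpdef l).mpr rfl
  have hp1 : ¬ p i1 := fun hh => h1l ((hpdef i1).mp hh)
  have hp2 : ¬ p i2 := fun hh => h2l ((hpdef i2).mp hh)
  -- integrability of haarTensor * h over the box measure
  have hInt : Integrable (fun x => haarTensor j k x * h x) (boxMeasure d) := by
    apply Integrable.bdd_mul (MemLp.integrable one_le_two (Lp.memLp h))
      (measurable_haarTensor j k).aestronglyMeasurable
    exact Filter.Eventually.of_forall (fun x => by rw [Real.norm_eq_abs]; exact abs_haarTensor_le j k x)
  have step1 : ∫ x, haarTensor j k x * h x ∂(boxMeasure d)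
      = ∫ x, haarTensor j k x * f x ∂(boxMeasure d) :=
    integral_congr_ae (Filter.EventuallyEq.mul Filter.EventuallyEq.rfl hfh)
  set F : (Fin d → ℝ) → ℝ := (Box d).indicator (fun x => haarTensor j k x * f x) with hF
  have step2 : ∫ x, haarTensor j k x * f x ∂(boxMeasure d) = ∫ x, F x := by
    rw [hF, integral_indicator (measurableSet_box d)]; rfl
  -- F is integrable w.r.t. volume
  have haeBox : ∀ᵐ x : (Fin d → ℝ), x ∈ Box d → h x = f x :=
    (ae_restrict_iff' (measurableSet_box d)).mp hfh
  have hFae : F =ᵐ[volume] (Box d).indicator (fun x => haarTensor j k x * h x) := by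
    filter_upwards [haeBox] with x hx
    by_cases hmem : x ∈ Box d
    · rw [hF, Set.indicator_of_mem hmem, Set.indicator_of_mem hmem, hx hmem]
    · rw [hF, Set.indicator_of_notMem hmem, Set.indicator_of_notMem hmem]
  have hFint : Integrable F volume := by
    apply Integrable.congr _ hFae.symm
    exact IntegrableOn.integrable_indicator hInt (measurableSet_box d)
  -- Fubini through the coordinate l
  set e := MeasurableEquiv.piEquivPiSubtypeProd (fun _ : Fin d => ℝ) p with he
  have MP := volume_preserving_piEquivPiSubtypeProd (fun _ : Fin d => ℝ) p
  have step3 : ∫ x, F x = ∫ w, F (e.symm w) := ((MP.symm e).integral_comp' F).symm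
  have hGint : Integrable (F ∘ ⇑e.symm) volume :=
    ((MP.symm e).integrable_comp_emb e.symm.measurableEmbedding).mpr hFint
  have step4 : ∫ w, F (e.symm w) = ∫ y, ∫ z, F (e.symm (y, z)) := by
    rw [Measure.volume_eq_prod] at hGint ⊢
    exact MeasureTheory.integral_prod _ hGint
  -- inner integral vanishes for every y
  have hinner : ∀ y : ({ i : Fin d // p i } → ℝ), (∫ z : { i : Fin d // ¬ p i } → ℝ,
      F (e.symm (y, z))) = 0 := by
    intro y
    set c : ℝ := y ⟨l, hpl⟩ with hc
    have hXapp : ∀ (z : { i : Fin d // ¬ p i } → ℝ) (i : Fin d),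
        e.symm (y, z) i = if hi : p i then y ⟨i, hi⟩ else z ⟨i, hi⟩ := by
      intro z i; rfl
    have hXl : ∀ z, e.symm (y, z) l = c := by
      intro z
      rw [hXapp z l, dif_pos hpl]
    have hXi : ∀ z (i' : { i : Fin d // ¬ p i }), e.symm (y, z) (i' : Fin d) = z i' := by
      intro z i'
      rw [hXapp, dif_neg i'.2]
    by_cases hcI : c ∈ Set.Icc (-1:ℝ) 1
    · -- main case
      set Box' : Set ({ i : Fin d // ¬ p i } → ℝ) :=
        Set.univ.pi fun _ => Set.Icc (-1:ℝ) 1 with hBox'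
      have hpt : ∀ z, F (e.symm (y, z)) = Box'.indicator
          (fun z => haarTensor j k (e.symm (y, z)) * f (e.symm (y, z))) z := by
        intro z
        by_cases hz : z ∈ Box'
        · rw [Set.indicator_of_mem hz, hF, Set.indicator_of_mem]
          intro i _
          rw [hXapp]
          by_cases hi : p i
          · rw [dif_pos hi]
            have : (⟨i, hi⟩ : { i : Fin d // p i }) = ⟨l, hpl⟩ := by
              apply Subtype.ext
              exact (hpdef i).mp hi
            rw [this]
            exact hcI
          · rw [dif_neg hi]
            exact hz ⟨i, hi⟩ (Set.mem_univ _)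
        · rw [Set.indicator_of_notMem hz, hF, Set.indicator_of_notMem]
          intro hmem
          apply hz
          intro i' _
          rw [← hXi z i']
          exact hmem i' (Set.mem_univ _)
      simp_rw [hpt]
      rw [integral_indicator (MeasurableSet.univ_pi fun _ => measurableSet_Icc)]
      -- factored pieces
      set κ : ℝ := haar (j l) (k l) c with hκ
      set A : { i : Fin d // ¬ p i } → ℝ := fun i' => a c i' with hA
      set c0 : ℝ := a c l * c + b c with hc0
      set G0 : { i : Fin d // ¬ p i } → ℝ → ℝ := fun i' t => haar (j i') (k i') t with hG0
      set Gm : { i : Fin d // ¬ p i } → { i : Fin d // ¬ p i } → ℝ → ℝ :=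
        fun m' i' t => haar (j i') (k i') t * (if i' = m' then t else 1) with hGm
      have hGmProd : ∀ (m' : { i : Fin d // ¬ p i }) (z : { i : Fin d // ¬ p i } → ℝ),
          (∏ i', Gm m' i' (z i')) = (∏ i', G0 i' (z i')) * z m' := by
        intro m' z
        rw [hGm, hG0]
        simp only
        rw [Finset.prod_mul_distrib, Finset.prod_ite_eq' Finset.univ m' (fun i' => z i'),
          if_pos (Finset.mem_univ m')]
      have hsplit : ∀ z : { i : Fin d // ¬ p i } → ℝ,
          haarTensor j k (e.symm (y, z)) * f (e.symm (y, z))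
          = κ * (c0 * ∏ i', G0 i' (z i')
              + ∑ m' : { i : Fin d // ¬ p i }, A m' * ∏ i', Gm m' i' (z i')) := by
        intro z
        have hTen : haarTensor j k (e.symm (y, z)) = κ * ∏ i', G0 i' (z i') := by
          rw [haarTensor, ← Finset.mul_prod_erase Finset.univ _ (Finset.mem_univ l), hXl]
          congr 1
          rw [Finset.prod_subtype (Finset.univ.erase l)
            (p := fun i => ¬ p i) (by
              intro i
              simp only [Finset.mem_erase, Finset.mem_univ, and_true]
              rw [hpdef i])]
          apply Finset.prod_congr rfl
          intro i' _
          rw [hXi z i', hG0]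
        have hfX : f (e.symm (y, z)) = c0 + ∑ m' : { i : Fin d // ¬ p i }, A m' * z m' := by
          rw [hab, hXl]
          rw [← Finset.add_sum_erase Finset.univ _ (Finset.mem_univ l), hXl]
          rw [Finset.sum_subtype (Finset.univ.erase l)
            (p := fun i => ¬ p i) (by
              intro i
              simp only [Finset.mem_erase, Finset.mem_univ, and_true]
              rw [hpdef i])]
          have : ∀ i' : { i : Fin d // ¬ p i }, a c i' * e.symm (y, z) i' = A i' * z i' := by
            intro i'
            rw [hXi z i', hA]
          rw [Finset.sum_congr rfl fun i' _ => this i']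
          ring
        rw [hTen, hfX]
        simp only [mul_add, Finset.mul_sum]
        congr 1
        · ring
        · apply Finset.sum_congr rfl
          intro m' _
          rw [hGmProd m' z]
          ring
      simp_rw [hsplit]
      -- integrability of pieces
      have hInt0 : IntegrableOn (fun z : { i : Fin d // ¬ p i } → ℝ => ∏ i', G0 i' (z i')) Box' := by
        rw [hBox']
        apply integrableOn_box_prod G0
        · intro i'; rw [hG0]; exact measurable_haar _ _
        · intro i' t _; rw [hG0]; exact abs_haar_le _ _ _
      have hIntm : ∀ m' : { i : Fin d // ¬ p i },
          IntegrableOn (fun z : { i : Fin d // ¬ p i } → ℝ => ∏ i', Gm m' i' (z i')) Box' := by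
        intro m'
        rw [hBox']
        apply integrableOn_box_prod (Gm m')
        · intro i'
          rw [hGm]
          apply (measurable_haar _ _).mul
          apply Measurable.ite (MeasurableSet.const _) measurable_id measurable_const
        · intro i' t ht
          rw [hGm]
          simp only
          rw [abs_mul]
          have h1 : |haar (j i') (k i') t| ≤ 1 := abs_haar_le _ _ _
          have h2 : |if i' = m' then t else 1| ≤ 1 := by
            split_ifs
            · rw [abs_le]; exact ⟨ht.1, ht.2⟩
            · norm_num
          calc |haar (j (i':Fin d)) (k (i':Fin d)) t| * |if i' = m' then t else 1| ≤ 1 * 1 :=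
                mul_le_mul h1 h2 (abs_nonneg _) zero_le_one
            _ = 1 := by norm_num
      -- the integrals vanish
      have hZ0 : ∫ z in Box', ∏ i', G0 i' (z i') = 0 := by
        rw [hBox', box_prod_integral G0]
        apply Finset.prod_eq_zero (Finset.mem_univ (⟨i1, hp1⟩ : { i : Fin d // ¬ p i }))
        rw [hG0]
        exact integral_haar_zero _ _ hj1 ((hv i1).2 hj1)
      have hZm : ∀ m' : { i : Fin d // ¬ p i }, ∫ z in Box', ∏ i', Gm m' i' (z i') = 0 := by
        intro m'
        rw [hBox', box_prod_integral (Gm m')]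
        have hex : ∃ i0 : { i : Fin d // ¬ p i }, (j (i0:Fin d) ≠ 0) ∧ i0 ≠ m' := by
          by_cases hm1 : (⟨i1, hp1⟩ : { i : Fin d // ¬ p i }) = m'
          · refine ⟨⟨i2, hp2⟩, hj2, ?_⟩
            intro hcon
            exact h12 (Subtype.ext_iff.mp (hm1.trans hcon.symm))
          · exact ⟨⟨i1, hp1⟩, hj1, hm1⟩
        obtain ⟨i0, hji0, hi0m⟩ := hex
        apply Finset.prod_eq_zero (Finset.mem_univ i0)
        rw [hGm]
        simp only [if_neg hi0m, mul_one]
        exact integral_haar_zero _ _ hji0 ((hv i0).2 hji0)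
      -- put it together
      rw [integral_const_mul]
      rw [integral_add (hInt0.const_mul c0)
        (integrable_finset_sum _ fun m' _ => (hIntm m').const_mul (A m'))]
      rw [integral_const_mul, hZ0,
        integral_finset_sum _ fun m' _ => (hIntm m').const_mul (A m')]
      have hterm : ∀ m' : { i : Fin d // ¬ p i },
          ∫ z in Box', A m' * ∏ i', Gm m' i' (z i') = 0 := by
        intro m'
        rw [integral_const_mul, hZm m', mul_zero]
      rw [Finset.sum_congr rfl fun m' _ => hterm m', Finset.sum_const_zero]
      ring
    · have : ∀ z, F (e.symm (y, z)) = 0 := by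
        intro z
        rw [hF, Set.indicator_of_notMem]
        intro hmem
        exact hcI (by rw [← hXl z]; exact hmem l (Set.mem_univ l))
      simp only [this, integral_zero]
  rw [step1, step2, step3, step4]
  simp only [hinner, integral_zero]

theorem haarTensor_orth_sliceAffine {d : ℕ} (l : Fin d) (j k : Fin d → ℕ) (hv : ValidIdx j k)
    (i1 i2 : Fin d) (h12 : i1 ≠ i2) (h1l : i1 ≠ l) (h2l : i2 ≠ l)
    (hj1 : j i1 ≠ 0) (hj2 : j i2 ≠ 0)
    (h : Lp ℝ 2 (boxMeasure d)) (f : (Fin d → ℝ) → ℝ) (hf : IsSliceAffine l f)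
    (hfh : ⇑h =ᵐ[boxMeasure d] f) :
    ∫ x, haarTensor j k x * h x ∂(boxMeasure d) = 0 :=
  haarTensor_orth_sliceAffine_aux l (fun i => i = l) (fun _ => Iff.rfl) j k hv
    i1 i2 h12 h1l h2l hj1 hj2 h f hf hfh

-- inner product formula
lemma inner_eq_integral {d : ℕ} (u v : Lp ℝ 2 (boxMeasure d)) :
    ⟪u, v⟫ = ∫ x, u x * v x ∂(boxMeasure d) := by
  rw [L2.inner_def]
  congr 1
  funext a
  simp [mul_comm]

-- vanishing inner products extend to the closed span
lemma orth_closure {E : Type*} [NormedAddCommGroup E] [InnerProductSpace ℝ E]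
    (v : E) (s : Set E) (hs : ∀ u ∈ s, ⟪v, u⟫ = 0) :
    ∀ u ∈ (Submodule.span ℝ s).topologicalClosure, ⟪v, u⟫ = 0 := by
  intro u hu
  have hle : (Submodule.span ℝ s).topologicalClosure ≤ LinearMap.ker (innerSL ℝ v : E →ₗ[ℝ] ℝ) := by
    apply Submodule.topologicalClosure_minimal
    · rw [Submodule.span_le]
      intro w hw
      simp only [SetLike.mem_coe, LinearMap.mem_ker, ContinuousLinearMap.coe_coe, innerSL_apply_apply]
      exact hs w hw
    · exact ContinuousLinearMap.isClosed_ker _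
  simpa using hle hu

lemma haarSpan_orth_haarSpan {d : ℕ} {S T : Finset (Fin d)} (hST : S ≠ T)
    {u v : Lp ℝ 2 (boxMeasure d)} (hu : u ∈ HaarSpanS d S) (hv : v ∈ HaarSpanS d T) :
    ⟪u, v⟫ = 0 := by
  -- first: generators of S are orthogonal to all of HaarSpanS T
  have gen : ∀ u0 ∈ {h : Lp ℝ 2 (boxMeasure d) | ∃ j k : Fin d → ℕ, ValidIdx j k ∧
      (Finset.univ.filter fun m => j m ≠ 0) = S ∧ ⇑h =ᵐ[boxMeasure d] haarTensor j k},
      ⟪u0, v⟫ = 0 := by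
    intro u0 hu0
    obtain ⟨j, k, hjk, hjS, hu0e⟩ := hu0
    have gen2 : ∀ v0 ∈ {h : Lp ℝ 2 (boxMeasure d) | ∃ j k : Fin d → ℕ, ValidIdx j k ∧
        (Finset.univ.filter fun m => j m ≠ 0) = T ∧ ⇑h =ᵐ[boxMeasure d] haarTensor j k},
        ⟪u0, v0⟫ = 0 := by
      intro v0 hv0
      obtain ⟨j', k', hjk', hjT, hv0e⟩ := hv0
      rw [inner_eq_integral]
      rw [integral_congr_ae (f := fun x => u0 x * v0 x) (g := fun x => haarTensor j k x * haarTensor j' k' x) (Filter.EventuallyEq.mul hu0e hv0e)]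
      exact haarTensor_orth j k j' k' hjk hjk' (by rw [hjS, hjT]; exact hST)
    exact orth_closure u0 _ gen2 v hv
  have : ∀ w ∈ {h : Lp ℝ 2 (boxMeasure d) | ∃ j k : Fin d → ℕ, ValidIdx j k ∧
      (Finset.univ.filter fun m => j m ≠ 0) = S ∧ ⇑h =ᵐ[boxMeasure d] haarTensor j k},
      ⟪v, w⟫ = 0 := by
    intro w hw
    rw [real_inner_comm]
    exact gen w hw
  rw [real_inner_comm]
  exact orth_closure v _ this u hu

lemma haarSpan_orth_SAffL {d : ℕ} {S : Finset (Fin d)} {l : Fin d}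
    (hcard : S.card = 2) (hlS : l ∉ S)
    {u h : Lp ℝ 2 (boxMeasure d)} (hu : u ∈ HaarSpanS d S) (hh : h ∈ SAffL d l) :
    ⟪u, h⟫ = 0 := by
  obtain ⟨f, hf, hfh⟩ := hh
  -- two distinct elements of S, both different from l
  obtain ⟨i1, i2, h12, hSeq⟩ := Finset.card_eq_two.mp hcard
  have hi1S : i1 ∈ S := by rw [hSeq]; simp
  have hi2S : i2 ∈ S := by rw [hSeq]; simp
  have h1l : i1 ≠ l := fun hcon => hlS (hcon ▸ hi1S)
  have h2l : i2 ≠ l := fun hcon => hlS (hcon ▸ hi2S)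
  have gen : ∀ u0 ∈ {w : Lp ℝ 2 (boxMeasure d) | ∃ j k : Fin d → ℕ, ValidIdx j k ∧
      (Finset.univ.filter fun m => j m ≠ 0) = S ∧ ⇑w =ᵐ[boxMeasure d] haarTensor j k},
      ⟪h, u0⟫ = 0 := by
    intro u0 hu0
    obtain ⟨j, k, hjk, hjS, hu0e⟩ := hu0
    have hj1 : j i1 ≠ 0 := by
      have : i1 ∈ Finset.univ.filter fun m => j m ≠ 0 := by rw [hjS]; exact hi1S
      simpa using this
    have hj2 : j i2 ≠ 0 := by
      have : i2 ∈ Finset.univ.filter fun m => j m ≠ 0 := by rw [hjS]; exact hi2S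
      simpa using this
    rw [real_inner_comm, inner_eq_integral]
    rw [integral_congr_ae (f := fun x => u0 x * h x) (g := fun x => haarTensor j k x * h x) (Filter.EventuallyEq.mul hu0e (Filter.EventuallyEq.refl _ _))]
    exact haarTensor_orth_sliceAffine l j k hjk i1 i2 h12 h1l h2l hj1 hj2 h f hf hfh
  rw [real_inner_comm]
  exact orth_closure h _ gen u hu

lemma pythagoras {E : Type*} [NormedAddCommGroup E] [InnerProductSpace ℝ E]
    {ι : Type*} (A : Finset ι) (v : ι → E)
    (ho : ∀ i ∈ A, ∀ j ∈ A, i ≠ j → ⟪v i, v j⟫ = 0) :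
    ‖∑ i ∈ A, v i‖ ^ 2 = ∑ i ∈ A, ‖v i‖ ^ 2 := by
  rw [← real_inner_self_eq_norm_sq, sum_inner]
  have : ∀ i ∈ A, ⟪v i, ∑ j ∈ A, v j⟫ = ‖v i‖ ^ 2 := by
    intro i hi
    rw [inner_sum]
    rw [Finset.sum_eq_single_of_mem i hi (fun j hj hne => ho i hi j hj (Ne.symm hne))]
    exact real_inner_self_eq_norm_sq _
  exact Finset.sum_congr rfl this

end auxiliaryLemmas

/-- Let `g = ∑_S f_S` be the Haar tensor decomposition of
`g ∈ L²([-1,1]^d)` and `g₂ = ∑_{|S|=2} f_S`.  If `λ_l(g₂)` denotes the best slice-affine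
approximation of `g₂` in direction `l`, then for `d ≥ 3`,
`(d-2)‖g₂‖² ≤ ∑_l ‖g₂ - λ_l(g₂)‖² ≤ d‖g₂‖²`. -/
theorem slice_affine_projection_g2_bounds (d : ℕ) (hd : 3 ≤ d)
    (g : Lp ℝ 2 (boxMeasure d)) (fS : Finset (Fin d) → Lp ℝ 2 (boxMeasure d))
    (hfS : ∀ S, fS S ∈ HaarSpanS d S)
    (hsum : g = ∑ S : Finset (Fin d), fS S)
    (g2 : Lp ℝ 2 (boxMeasure d))
    (hg2 : g2 = ∑ S ∈ Finset.univ.filter (fun S : Finset (Fin d) => S.card = 2), fS S)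
    (ll : Fin d → Lp ℝ 2 (boxMeasure d))
    (hll : ∀ l, ll l ∈ SAffL d l)
    (hllmin : ∀ l, ∀ h ∈ SAffL d l, ‖g2 - ll l‖ ≤ ‖g2 - h‖) :
    ((d : ℝ) - 2) * ‖g2‖ ^ 2 ≤ ∑ l : Fin d, ‖g2 - ll l‖ ^ 2 ∧
    ∑ l : Fin d, ‖g2 - ll l‖ ^ 2 ≤ (d : ℝ) * ‖g2‖ ^ 2 := by
  set P : Finset (Finset (Fin d)) :=
    Finset.univ.filter (fun S : Finset (Fin d) => S.card = 2) with hP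
  have hPcard : ∀ S ∈ P, S.card = 2 := by
    intro S hS; exact (Finset.mem_filter.mp hS).2
  have horth : ∀ S ∈ P, ∀ T ∈ P, S ≠ T → ⟪fS S, fS T⟫ = 0 := by
    intro S _ T _ hST
    exact haarSpan_orth_haarSpan hST (hfS S) (hfS T)
  have hg2norm : ‖g2‖ ^ 2 = ∑ S ∈ P, ‖fS S‖ ^ 2 := by
    rw [hg2]; exact pythagoras P fS horth
  constructor
  · -- lower bound
    set Q : Fin d → Finset (Finset (Fin d)) := fun l => P.filter (fun S => l ∉ S) with hQ
    have hQP : ∀ l, Q l ⊆ P := fun l => Finset.filter_subset _ _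
    have hlower : ∀ l : Fin d, ∑ S ∈ Q l, ‖fS S‖ ^ 2 ≤ ‖g2 - ll l‖ ^ 2 := by
      intro l
      set w : Lp ℝ 2 (boxMeasure d) := ∑ S ∈ Q l, fS S with hw
      have hwnorm : ‖w‖ ^ 2 = ∑ S ∈ Q l, ‖fS S‖ ^ 2 := by
        rw [hw]
        exact pythagoras (Q l) fS (fun i hi jj hj => horth i (hQP l hi) jj (hQP l hj))
      have hinner1 : ⟪g2, w⟫ = ‖w‖ ^ 2 := by
        rw [hg2, hw, sum_inner, hwnorm]
        have hstep : ∀ S ∈ P, ⟪fS S, ∑ T ∈ Q l, fS T⟫ = ∑ T ∈ Q l, ⟪fS S, fS T⟫ := by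
          intro S _; rw [inner_sum]
        rw [Finset.sum_congr rfl hstep, Finset.sum_comm]
        apply Finset.sum_congr rfl
        intro T hT
        rw [Finset.sum_eq_single_of_mem T (hQP l hT)
          (fun S hS hne => horth S hS T (hQP l hT) hne)]
        exact real_inner_self_eq_norm_sq _
      have hinner2 : ⟪ll l, w⟫ = 0 := by
        rw [hw, inner_sum]
        apply Finset.sum_eq_zero
        intro T hT
        rw [real_inner_comm]
        exact haarSpan_orth_SAffL (hPcard T (hQP l hT))
          ((Finset.mem_filter.mp hT).2) (hfS T) (hll l)
      have hinner : ⟪g2 - ll l, w⟫ = ‖w‖ ^ 2 := by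
        rw [inner_sub_left, hinner1, hinner2, sub_zero]
      have hCS : ‖w‖ ^ 2 ≤ ‖g2 - ll l‖ * ‖w‖ := by
        rw [← hinner]
        exact real_inner_le_norm _ _
      rw [← hwnorm]
      by_cases hwz : ‖w‖ = 0
      · rw [hwz]
        simpa using sq_nonneg ‖g2 - ll l‖
      · have hwpos : 0 < ‖w‖ := lt_of_le_of_ne (norm_nonneg _) (Ne.symm hwz)
        have : ‖w‖ ≤ ‖g2 - ll l‖ := by
          have := hCS
          rw [pow_two] at this
          exact le_of_mul_le_mul_right this hwpos
        exact pow_le_pow_left₀ (norm_nonneg _) this 2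
    have hcount : ∑ l : Fin d, ∑ S ∈ Q l, ‖fS S‖ ^ 2 = ((d:ℝ) - 2) * ∑ S ∈ P, ‖fS S‖ ^ 2 := by
      have hfilt : ∀ l, ∑ S ∈ Q l, ‖fS S‖ ^ 2
          = ∑ S ∈ P, (if l ∉ S then ‖fS S‖ ^ 2 else 0) := by
        intro l; rw [hQ]; exact Finset.sum_filter _ _
      rw [Finset.sum_congr rfl fun l _ => hfilt l, Finset.sum_comm, Finset.mul_sum]
      apply Finset.sum_congr rfl
      intro S hS
      rw [Finset.sum_ite, Finset.sum_const_zero, add_zero, Finset.sum_const, nsmul_eq_mul]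
      congr 1
      have : Finset.univ.filter (fun l : Fin d => l ∉ S) = Sᶜ := by
        ext i; simp [Finset.mem_compl]
      rw [this, Finset.card_compl, Fintype.card_fin, hPcard S hS]
      have : (2:ℕ) ≤ d := by omega
      push_cast [Nat.cast_sub this]
      ring
    calc ((d : ℝ) - 2) * ‖g2‖ ^ 2 = ∑ l : Fin d, ∑ S ∈ Q l, ‖fS S‖ ^ 2 := by
          rw [hcount, hg2norm]
      _ ≤ ∑ l : Fin d, ‖g2 - ll l‖ ^ 2 := Finset.sum_le_sum fun l _ => hlower l
  · -- upper bound
    have hzero : ∀ l, (0 : Lp ℝ 2 (boxMeasure d)) ∈ SAffL d l := by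
      intro l
      refine ⟨fun _ => 0, ⟨fun _ _ => 0, fun _ => 0, by intro x; simp⟩, ?_⟩
      exact Lp.coeFn_zero _ _ _
    have hle : ∀ l, ‖g2 - ll l‖ ≤ ‖g2‖ := by
      intro l
      have := hllmin l 0 (hzero l)
      rwa [sub_zero] at this
    calc ∑ l : Fin d, ‖g2 - ll l‖ ^ 2 ≤ ∑ l : Fin d, ‖g2‖ ^ 2 := by
          apply Finset.sum_le_sum
          intro l _
          exact pow_le_pow_left₀ (norm_nonneg _) (hle l) 2
      _ = (d : ℝ) * ‖g2‖ ^ 2 := by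
          rw [Finset.sum_const, Finset.card_univ, Fintype.card_fin, nsmul_eq_mul]
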